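/- arXiv:1707.05966 — 3 statements merged into one kernel-verified Lean document; each statement's English description precedes it below -/
import Mathlib

section
/- Let n ≥ 1 and p ∈ (0,1]. The weight W_p belongs to the Muckenhoupt class A_1(ℝ^n): there exists a constant C > 0 such that for every ball B ⊂ ℝ^n, (1/|B|) ∫_B W_p(x) dx ≤ C · inf_{y ∈ B} W_p(y), where |B| denotes the Lebesgue measure of B. -/
open MeasureTheory Real
open scoped ENNReal Classical

noncomputable section

/-- `ℝⁿ` as a Euclidean space. -/
abbrev Rn (n : ℕ) := EuclideanSpace ℝ (Fin n)

/-- The Musielak-Orlicz growth function `Φ_p`. -/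
def Phi (n : ℕ) (p : ℝ) (x : Rn n) (t : ℝ) : ℝ :=
  if ∃ k : ℕ, (n : ℝ) * (1 / p - 1) = (k : ℝ) then
    t / (Real.log (Real.exp 1 + t) +
      (t * (1 + ‖x‖) ^ (n : ℝ)) ^ (1 - p) * (Real.log (Real.exp 1 + ‖x‖)) ^ p)
  else
    t / (Real.log (Real.exp 1 + t) + (t * (1 + ‖x‖) ^ (n : ℝ)) ^ (1 - p))

/-- The Orlicz function `φ₀(t) = t / log(e+t)`. -/
def phi0 (t : ℝ) : ℝ := t / Real.log (Real.exp 1 + t)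

/-- The weight `W_p`. -/
def Wp (n : ℕ) (p : ℝ) (x : Rn n) : ℝ :=
  if p = 1 then 1 / Real.log (Real.exp 1 + ‖x‖)
  else if ∃ k : ℕ, (n : ℝ) * (1 / p - 1) = (k : ℝ) then
    (1 + ‖x‖) ^ (-(n : ℝ) * (1 - p)) * (Real.log (Real.exp 1 + ‖x‖)) ^ (-p)
  else (1 + ‖x‖) ^ (-(n : ℝ) * (1 - p))

/-- Extension of `Φ_p(x, ·)` to `ℝ≥0∞`. -/
def PhiE (n : ℕ) (p : ℝ) (x : Rn n) (t : ℝ≥0∞) : ℝ≥0∞ :=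
  if t = ⊤ then ⊤ else ENNReal.ofReal (Phi n p x t.toReal)

/-- Extension of `φ₀` to `ℝ≥0∞`. -/
def phi0E (t : ℝ≥0∞) : ℝ≥0∞ :=
  if t = ⊤ then ⊤ else ENNReal.ofReal (phi0 t.toReal)

/-- The Luxemburg quasi-norm `‖·‖_{L^{Φ_p}}`. -/
def luxPhiNorm (n : ℕ) (p : ℝ) (F : Rn n → ℝ≥0∞) : ℝ≥0∞ :=
  sInf {lam : ℝ≥0∞ | 0 < lam ∧ (∫⁻ x : Rn n, PhiE n p x (F x / lam)) ≤ 1}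

/-- The Luxemburg norm `‖·‖_{L^{φ₀}}`. -/
def luxPhi0Norm (n : ℕ) (F : Rn n → ℝ≥0∞) : ℝ≥0∞ :=
  sInf {lam : ℝ≥0∞ | 0 < lam ∧ (∫⁻ x : Rn n, phi0E (F x / lam)) ≤ 1}

/-- The weighted quasi-norm `‖·‖_{L^p_{W_p}}`. -/
def wNorm (n : ℕ) (p : ℝ) (F : Rn n → ℝ≥0∞) : ℝ≥0∞ :=
  (∫⁻ x : Rn n, F x ^ p * ENNReal.ofReal (Wp n p x)) ^ (1 / p)

/-- The weighted norm `‖·‖_{L^1_{W_1}}`. -/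
def w1Norm (n : ℕ) (F : Rn n → ℝ≥0∞) : ℝ≥0∞ :=
  ∫⁻ x : Rn n, F x * ENNReal.ofReal (Wp n 1 x)

/-- The characteristic function of a set, `ℝ≥0∞`-valued. -/
def chi (n : ℕ) (B : Set (Rn n)) : Rn n → ℝ≥0∞ := B.indicator fun _ => 1

/-- radial profile -/
def Afun (a q s : ℝ) : ℝ :=
  (1 + s) ^ (-a) * (Real.log (Real.exp 1 + s)) ^ (-q)

lemma one_le_logE {s : ℝ} (hs : 0 ≤ s) : 1 ≤ Real.log (Real.exp 1 + s) := by
  have : Real.exp 1 ≤ Real.exp 1 + s := by linarith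
  calc (1:ℝ) = Real.log (Real.exp 1) := (Real.log_exp 1).symm
    _ ≤ _ := Real.log_le_log (Real.exp_pos 1) this

lemma Afun_pos {a q s : ℝ} (hs : 0 ≤ s) : 0 < Afun a q s := by
  have h1 : (0:ℝ) < 1 + s := by linarith
  have h2 : (0:ℝ) < Real.log (Real.exp 1 + s) := lt_of_lt_of_le one_pos (one_le_logE hs)
  exact mul_pos (Real.rpow_pos_of_pos h1 _) (Real.rpow_pos_of_pos h2 _)

lemma Afun_le_one {a q s : ℝ} (ha : 0 ≤ a) (hq : 0 ≤ q) (hs : 0 ≤ s) : Afun a q s ≤ 1 := by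
  have h1 : (1:ℝ) ≤ 1 + s := by linarith
  have := Real.rpow_le_one_of_one_le_of_nonpos h1 (neg_nonpos.2 ha)
  have := Real.rpow_le_one_of_one_le_of_nonpos (one_le_logE hs) (neg_nonpos.2 hq)
  have hp1 : (0:ℝ) ≤ (1+s) ^ (-a) := Real.rpow_nonneg (by linarith) _
  calc Afun a q s ≤ (1+s) ^ (-a) * 1 :=
        mul_le_mul_of_nonneg_left (by assumption) hp1
    _ = (1+s) ^ (-a) := mul_one _
    _ ≤ 1 := by assumption

lemma Afun_anti {a q s t : ℝ} (ha : 0 ≤ a) (hq : 0 ≤ q) (hs : 0 ≤ s) (hst : s ≤ t) :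
    Afun a q t ≤ Afun a q s := by
  have h1 : (0:ℝ) < 1 + s := by linarith
  have h2 : (0:ℝ) < Real.log (Real.exp 1 + s) := lt_of_lt_of_le one_pos (one_le_logE hs)
  have hl : Real.log (Real.exp 1 + s) ≤ Real.log (Real.exp 1 + t) :=
    Real.log_le_log (by positivity) (by linarith)
  have e1 : (1+t) ^ (-a) ≤ (1+s) ^ (-a) :=
    Real.rpow_le_rpow_of_nonpos h1 (by linarith) (neg_nonpos.2 ha)
  have e2 : (Real.log (Real.exp 1 + t)) ^ (-q) ≤ (Real.log (Real.exp 1 + s)) ^ (-q) :=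
    Real.rpow_le_rpow_of_nonpos h2 hl (neg_nonpos.2 hq)
  exact mul_le_mul e1 e2 (Real.rpow_nonneg (le_trans (by linarith : (0:ℝ) ≤ Real.log (Real.exp 1 + s)) hl) _) (Real.rpow_nonneg h1.le _)

lemma Afun_comp {N a q s R : ℝ} (ha : 0 ≤ a) (haN : a < N) (hq1 : q ≤ 1)
    (hs : 0 ≤ s) (hsR : s ≤ R) :
    Afun a q s ≤ (1 + 2/(N-a)) * ((1+R)/(1+s)) ^ ((a+N)/2) * Afun a q R := by
  have hs1 : (0:ℝ) < 1 + s := by linarith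
  have hR1 : (0:ℝ) < 1 + R := by linarith
  set u : ℝ := (1+R)/(1+s) with hu_def
  have hu0 : 0 < u := div_pos hR1 hs1
  have hu1 : 1 ≤ u := (one_le_div hs1).2 (by linarith)
  set Ls : ℝ := Real.log (Real.exp 1 + s) with hLs_def
  set LR : ℝ := Real.log (Real.exp 1 + R) with hLR_def
  have hLs1 : 1 ≤ Ls := one_le_logE hs
  have hLR1 : 1 ≤ LR := one_le_logE (hs.trans hsR)
  set v : ℝ := LR / Ls with hv_def
  have hLs0 : 0 < Ls := lt_of_lt_of_le one_pos hLs1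
  have hv1 : 1 ≤ v := (one_le_div hLs0).2 (Real.log_le_log (by positivity) (by linarith))
  have hv0 : 0 < v := lt_of_lt_of_le one_pos hv1
  -- Step A : Afun a q s = u^a * v^q * Afun a q R
  have hA : Afun a q s = u ^ a * v ^ q * Afun a q R := by
    have h1 : u ^ a = (1+R) ^ a / (1+s) ^ a := Real.div_rpow hR1.le hs1.le a
    have h2 : v ^ q = LR ^ q / Ls ^ q := Real.div_rpow (by linarith : (0:ℝ) ≤ LR) hLs0.le q
    have e1 : (1+s) ^ (-a) = ((1+s) ^ a)⁻¹ := Real.rpow_neg hs1.le a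
    have e2 : (1+R) ^ (-a) = ((1+R) ^ a)⁻¹ := Real.rpow_neg hR1.le a
    have e3 : Ls ^ (-q) = (Ls ^ q)⁻¹ := Real.rpow_neg hLs0.le q
    have e4 : LR ^ (-q) = (LR ^ q)⁻¹ := Real.rpow_neg (by linarith) q
    have p1 : (0:ℝ) < (1+s) ^ a := Real.rpow_pos_of_pos hs1 a
    have p2 : (0:ℝ) < (1+R) ^ a := Real.rpow_pos_of_pos hR1 a
    have p3 : (0:ℝ) < Ls ^ q := Real.rpow_pos_of_pos hLs0 q
    have p4 : (0:ℝ) < LR ^ q := Real.rpow_pos_of_pos (by linarith) q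
    unfold Afun
    rw [← hLs_def, ← hLR_def, h1, h2, e1, e2, e3, e4]
    field_simp
  -- Step B : v ≤ 1 + log u
  have hB : v ≤ 1 + Real.log u := by
    have hes : (0:ℝ) < Real.exp 1 + s := by have := Real.exp_pos 1; linarith
    have heR : (0:ℝ) < Real.exp 1 + R := by have := Real.exp_pos 1; linarith
    have hratio : (Real.exp 1 + R) / (Real.exp 1 + s) ≤ u := by
      rw [div_le_div_iff₀ hes hs1]
      have he1 : (1:ℝ) ≤ Real.exp 1 := by
        have := Real.add_one_le_exp (1:ℝ); linarith
      nlinarith [sub_nonneg.2 hsR]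
    have hLRs : LR ≤ Ls + Real.log u := by
      have : LR = Real.log ((Real.exp 1 + R) / (Real.exp 1 + s)) + Ls := by
        rw [hLR_def, hLs_def, ← Real.log_mul (by positivity) hes.ne',
          div_mul_cancel₀ _ hes.ne']
      rw [this]
      have := Real.log_le_log (div_pos heR hes) hratio
      linarith
    have hlogu : 0 ≤ Real.log u := Real.log_nonneg hu1
    rw [hv_def, div_le_iff₀ hLs0]
    nlinarith
  -- Step C : 1 + log u ≤ (1 + 2/(N-a)) * u ^ ((N-a)/2)
  set ε : ℝ := (N - a)/2 with hε_def
  have hε0 : 0 < ε := by rw [hε_def]; linarith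
  have hC : 1 + Real.log u ≤ (1 + 2/(N-a)) * u ^ ε := by
    have h1 : Real.log (u ^ ε) = ε * Real.log u := Real.log_rpow hu0 ε
    have h2 : Real.log (u ^ ε) ≤ u ^ ε - 1 := by
      have := Real.log_le_sub_one_of_pos (Real.rpow_pos_of_pos hu0 ε)
      linarith
    have h3 : Real.log u ≤ u ^ ε / ε := by
      rw [le_div_iff₀ hε0]; nlinarith
    have h4 : (1:ℝ) ≤ u ^ ε := Real.one_le_rpow hu1 hε0.le
    have h5 : 2/(N-a) = 1/ε := by rw [hε_def]; field_simp
    rw [h5]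
    have : u ^ ε / ε = (1/ε) * u ^ ε := by ring
    nlinarith
  -- Step D : v^q ≤ v
  have hD : v ^ q ≤ v := by
    calc v ^ q ≤ v ^ (1:ℝ) := Real.rpow_le_rpow_of_exponent_le hv1 hq1
      _ = v := Real.rpow_one v
  -- combine
  have hupos : (0:ℝ) ≤ u ^ a := (Real.rpow_pos_of_pos hu0 a).le
  have hAR : 0 ≤ Afun a q R := (Afun_pos (hs.trans hsR)).le
  have key : u ^ a * v ^ q ≤ (1 + 2/(N-a)) * u ^ ((a+N)/2) := by
    have h6 : u ^ a * u ^ ε = u ^ ((a+N)/2) := by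
      rw [← Real.rpow_add hu0]; congr 1; rw [hε_def]; ring
    calc u ^ a * v ^ q ≤ u ^ a * ((1 + 2/(N-a)) * u ^ ε) :=
          mul_le_mul_of_nonneg_left (hD.trans (hB.trans hC)) hupos
      _ = (1 + 2/(N-a)) * (u ^ a * u ^ ε) := by ring
      _ = (1 + 2/(N-a)) * u ^ ((a+N)/2) := by rw [h6]
  calc Afun a q s = u ^ a * v ^ q * Afun a q R := hA
    _ ≤ (1 + 2/(N-a)) * u ^ ((a+N)/2) * Afun a q R :=
        mul_le_mul_of_nonneg_right key hAR
  -- done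
lemma measurable_Afun (a q : ℝ) : Measurable (Afun a q) := by
  unfold Afun
  exact ((measurable_const.add measurable_id).pow measurable_const).mul
    ((Real.measurable_log.comp (measurable_const.add measurable_id)).pow measurable_const)

lemma measurable_Afun_norm (n : ℕ) (a q : ℝ) : Measurable fun x : Rn n => Afun a q ‖x‖ :=
  (measurable_Afun a q).comp measurable_norm

lemma integrableOn_Afun {n : ℕ} {a q : ℝ} (ha : 0 ≤ a) (hq : 0 ≤ q) {s : Set (Rn n)}
    (hs : volume s ≠ ⊤) : IntegrableOn (fun x => Afun a q ‖x‖) s := by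
  refine Measure.integrableOn_of_bounded hs
    ((measurable_Afun_norm n a q).aestronglyMeasurable) (M := 1) (ae_of_all _ fun x => ?_)
  rw [Real.norm_eq_abs, abs_of_pos (Afun_pos (norm_nonneg x))]
  exact Afun_le_one ha hq (norm_nonneg x)

lemma integral_ball_Afun_le {n : ℕ} (hn : 1 ≤ n) {a q : ℝ} (ha : 0 ≤ a) (haN : a < (n:ℝ))
    (hq0 : 0 ≤ q) (hq1 : q ≤ 1) :
    ∃ C : ℝ, 0 < C ∧ ∀ R : ℝ, 1 ≤ R →
      ∫ x in Metric.ball (0 : Rn n) R, Afun a q ‖x‖ ≤ C * R ^ (n:ℝ) * Afun a q R := by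
  haveI : Nonempty (Fin n) := ⟨⟨0, hn⟩⟩
  haveI : Nontrivial (Rn n) := by
    refine ⟨0, EuclideanSpace.single ⟨0, hn⟩ 1, fun h => ?_⟩
    have := congrArg (fun f : Rn n => f ⟨0, hn⟩) h
    simp at this
  have hdim : Module.finrank ℝ (Rn n) = n := finrank_euclideanSpace_fin
  set β : ℝ := (a + n)/2 with hβ_def
  have hβ0 : 0 ≤ β := by rw [hβ_def]; positivity
  have hβn : β < (n:ℝ) := by rw [hβ_def]; linarith
  set C1 : ℝ := 1 + 2/((n:ℝ) - a) with hC1_def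
  have hC1 : 0 < C1 := by
    have : 0 < (n:ℝ) - a := by linarith
    rw [hC1_def]; positivity
  set volB1 : ℝ := (volume (Metric.ball (0 : Rn n) 1)).toReal with hvolB1_def
  have hvolB1 : 0 < volB1 := by
    rw [hvolB1_def]
    exact ENNReal.toReal_pos (Metric.measure_ball_pos volume 0 one_pos).ne'
      measure_ball_lt_top.ne
  have hnpos : (0:ℝ) < n := by exact_mod_cast hn
  have hnβ' : (0:ℝ) < (n:ℝ) - β := by linarith
  refine ⟨(n:ℝ) * volB1 * C1 * 2 ^ β / ((n:ℝ) - β),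
    div_pos (by positivity) hnβ', fun R hR => ?_⟩
  have hR0 : (0:ℝ) < R := lt_of_lt_of_le one_pos hR
  set g : ℝ → ℝ := (Set.Iio R).indicator (Afun a q) with hg_def
  have step1 : ∫ x in Metric.ball (0 : Rn n) R, Afun a q ‖x‖ = ∫ x : Rn n, g ‖x‖ := by
    rw [← integral_indicator measurableSet_ball]
    congr 1; funext x
    by_cases h : ‖x‖ < R <;>
      simp [hg_def, Set.indicator, Metric.mem_ball, dist_zero_right, h]
  have step2 : ∫ x : Rn n, g ‖x‖ =
      n • (volume (Metric.ball (0:Rn n) 1)).toReal •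
        ∫ y in Set.Ioi (0:ℝ), y ^ (n - 1) • g y := by
    have := MeasureTheory.integral_fun_norm_addHaar (volume : Measure (Rn n)) g
    rwa [hdim] at this
  have step3 : ∫ y in Set.Ioi (0:ℝ), y ^ (n - 1) • g y
      = ∫ y in Set.Ioo (0:ℝ) R, y ^ (n - 1) * Afun a q y := by
    have : ∀ y : ℝ, y ^ (n-1) • g y
        = (Set.Iio R).indicator (fun y => y ^ (n-1) * Afun a q y) y := by
      intro y
      by_cases h : y < R <;> simp [hg_def, Set.indicator, h]
    simp_rw [this]
    rw [setIntegral_indicator measurableSet_Iio, Set.Ioi_inter_Iio]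
  set e : ℝ := (n:ℝ) - 1 - β with he_def
  have he : -1 < e := by rw [he_def]; linarith
  set K : ℝ := C1 * (1+R) ^ β * Afun a q R with hK_def
  have hARpos : 0 < Afun a q R := Afun_pos hR0.le
  have hK0 : 0 ≤ K := by
    rw [hK_def]
    have := Real.rpow_nonneg (by linarith : (0:ℝ) ≤ 1+R) β
    positivity
  have hInt_rpow : IntegrableOn (fun y : ℝ => K * y ^ e) (Set.Ioo 0 R) := by
    exact (((intervalIntegral.intervalIntegrable_rpow' he (a := 0) (b := R)).1).mono_set
      Set.Ioo_subset_Ioc_self).const_mul K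
  have step4 : ∫ y in Set.Ioo (0:ℝ) R, y ^ (n - 1) * Afun a q y
      ≤ ∫ y in Set.Ioo (0:ℝ) R, K * y ^ e := by
    refine setIntegral_mono_on ?_ hInt_rpow measurableSet_Ioo ?_
    · refine Measure.integrableOn_of_bounded measure_Ioo_lt_top.ne
        (((measurable_id.pow_const (n-1)).mul (measurable_Afun a q)).aestronglyMeasurable)
        (M := R ^ (n-1)) ?_
      filter_upwards [ae_restrict_mem measurableSet_Ioo] with y hy
      have hy0 : 0 < y := hy.1
      have hA1 := Afun_le_one ha hq0 hy0.le
      have hA0 := (Afun_pos (a := a) (q := q) hy0.le).le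
      rw [Real.norm_eq_abs, abs_of_nonneg (by positivity)]
      calc y ^ (n-1) * Afun a q y ≤ y ^ (n-1) * 1 := by
            exact mul_le_mul_of_nonneg_left hA1 (by positivity)
        _ = y ^ (n-1) := mul_one _
        _ ≤ R ^ (n-1) := pow_le_pow_left₀ hy0.le hy.2.le _
    · intro y hy
      have hy0 : 0 < y := hy.1
      have hyR : y ≤ R := hy.2.le
      have comp := Afun_comp (N := (n:ℝ)) ha haN hq1 hy0.le hyR
      have hsplit : ((1+R)/(1+y)) ^ β = (1+R) ^ β * ((1+y) ^ β)⁻¹ := by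
        rw [Real.div_rpow (by linarith) (by linarith), div_eq_mul_inv]
      have hdrop : ((1+y) ^ β)⁻¹ ≤ y ^ (-β) := by
        rw [Real.rpow_neg hy0.le, inv_le_inv₀ (Real.rpow_pos_of_pos (by linarith) β)
          (Real.rpow_pos_of_pos hy0 β)]
        exact Real.rpow_le_rpow hy0.le (by linarith) hβ0
      have hpowsplit : y ^ (n-1) * y ^ (-β) = y ^ e := by
        rw [← Real.rpow_natCast y (n-1), ← Real.rpow_add hy0, he_def]
        congr 1
        rw [Nat.cast_sub hn, Nat.cast_one]
        ring
      have hy_nonneg : (0:ℝ) ≤ y ^ (n-1) := by positivity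
      calc y ^ (n-1) * Afun a q y
          ≤ y ^ (n-1) * (C1 * ((1+R)/(1+y)) ^ β * Afun a q R) :=
            mul_le_mul_of_nonneg_left comp hy_nonneg
        _ = (C1 * Afun a q R * (1+R) ^ β) * (y ^ (n-1) * ((1+y) ^ β)⁻¹) := by
            rw [hsplit]; ring
        _ ≤ (C1 * Afun a q R * (1+R) ^ β) * (y ^ (n-1) * y ^ (-β)) := by
            refine mul_le_mul_of_nonneg_left
              (mul_le_mul_of_nonneg_left hdrop hy_nonneg) ?_
            have := Real.rpow_nonneg (by linarith : (0:ℝ) ≤ 1+R) β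
            positivity
        _ = K * y ^ e := by rw [hpowsplit, hK_def]; ring
  have step5 : ∫ y in Set.Ioo (0:ℝ) R, K * y ^ e = K * (R ^ (e+1) / (e+1)) := by
    rw [MeasureTheory.integral_const_mul]
    congr 1
    rw [← MeasureTheory.integral_Ioc_eq_integral_Ioo,
      ← intervalIntegral.integral_of_le hR0.le, integral_rpow (Or.inl he),
      Real.zero_rpow (by linarith : e + 1 ≠ 0)]
    ring
  -- assemble
  have hfinal : (n:ℝ) * (volB1 * (K * (R ^ (e+1) / (e+1))))
      ≤ (n:ℝ) * volB1 * C1 * 2 ^ β / ((n:ℝ) - β) * R ^ (n:ℝ) * Afun a q R := by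
    have he1 : e + 1 = (n:ℝ) - β := by rw [he_def]; ring
    have h2R : (1+R) ^ β ≤ 2 ^ β * R ^ β := by
      calc (1+R) ^ β ≤ (2*R) ^ β :=
            Real.rpow_le_rpow (by linarith) (by linarith) hβ0
        _ = 2 ^ β * R ^ β := Real.mul_rpow (by norm_num) hR0.le
    have hRsum : R ^ β * R ^ (e+1) = R ^ (n:ℝ) := by
      rw [← Real.rpow_add hR0, he1]; ring_nf
    have hKR : K * R ^ (e+1) ≤ C1 * 2 ^ β * R ^ (n:ℝ) * Afun a q R := by
      have hRe1 : (0:ℝ) ≤ R ^ (e+1) := Real.rpow_nonneg hR0.le _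
      calc K * R ^ (e+1) = C1 * Afun a q R * ((1+R) ^ β * R ^ (e+1)) := by
            rw [hK_def]; ring
        _ ≤ C1 * Afun a q R * ((2 ^ β * R ^ β) * R ^ (e+1)) := by
            refine mul_le_mul_of_nonneg_left (mul_le_mul_of_nonneg_right h2R hRe1) ?_
            positivity
        _ = C1 * 2 ^ β * R ^ (n:ℝ) * Afun a q R := by
            rw [mul_assoc (2 ^ β : ℝ), hRsum]; ring
    have hnβ : (0:ℝ) < (n:ℝ) - β := by linarith
    rw [he1]
    calc (n:ℝ) * (volB1 * (K * (R ^ ((n:ℝ)-β) / ((n:ℝ)-β))))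
        = ((n:ℝ) * volB1 / ((n:ℝ)-β)) * (K * R ^ ((n:ℝ)-β)) := by ring
      _ ≤ ((n:ℝ) * volB1 / ((n:ℝ)-β)) * (C1 * 2 ^ β * R ^ (n:ℝ) * Afun a q R) := by
          refine mul_le_mul_of_nonneg_left ?_ (by positivity)
          rw [← he1]; exact hKR
      _ = (n:ℝ) * volB1 * C1 * 2 ^ β / ((n:ℝ) - β) * R ^ (n:ℝ) * Afun a q R := by
          ring
  have chain : ∫ x in Metric.ball (0 : Rn n) R, Afun a q ‖x‖
      ≤ (n:ℝ) * (volB1 * (K * (R ^ (e+1) / (e+1)))) := by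
    rw [step1, step2, step3, nsmul_eq_mul, smul_eq_mul, ← hvolB1_def]
    exact mul_le_mul_of_nonneg_left
      (mul_le_mul_of_nonneg_left (step4.trans_eq step5) hvolB1.le) hnpos.le
  exact chain.trans hfinal
lemma A1_general {n : ℕ} (hn : 1 ≤ n) {a q : ℝ} (ha : 0 ≤ a) (haN : a < (n:ℝ))
    (hq0 : 0 ≤ q) (hq1 : q ≤ 1) :
    ∃ C : ℝ, 0 < C ∧ ∀ (c : Rn n) (r : ℝ), 0 < r →
      (volume (Metric.ball c r)).toReal⁻¹ * (∫ x in Metric.ball c r, Afun a q ‖x‖) ≤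
        C * ⨅ y : Metric.ball c r, Afun a q ‖(y : Rn n)‖ := by
  obtain ⟨C3, hC3, hcore⟩ := integral_ball_Afun_le hn ha haN hq0 hq1
  haveI : Nonempty (Fin n) := ⟨⟨0, hn⟩⟩
  have hdim : Module.finrank ℝ (Rn n) = n := finrank_euclideanSpace_fin
  set β : ℝ := (a + n)/2 with hβ_def
  have hβ0 : 0 ≤ β := by positivity
  set C1 : ℝ := 1 + 2/((n:ℝ) - a) with hC1_def
  have hC1 : 0 < C1 := by
    have : 0 < (n:ℝ) - a := by linarith
    rw [hC1_def]; positivity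
  set K1 : ℝ := C1 * 3 ^ β with hK1_def
  have hK1 : 0 < K1 := by
    have := Real.rpow_pos_of_pos (by norm_num : (0:ℝ) < 3) β
    rw [hK1_def]; positivity
  set volB1 : ℝ := (volume (Metric.ball (0 : Rn n) 1)).toReal with hvolB1_def
  have hvolB1 : 0 < volB1 := by
    rw [hvolB1_def]
    exact ENNReal.toReal_pos (Metric.measure_ball_pos volume 0 one_pos).ne'
      measure_ball_lt_top.ne
  set K2 : ℝ := C3 * 4 ^ ((n:ℝ)) / volB1 with hK2_def
  have hK2 : 0 < K2 := by
    have := Real.rpow_pos_of_pos (by norm_num : (0:ℝ) < 4) ((n:ℝ))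
    rw [hK2_def]; positivity
  refine ⟨max K1 K2, lt_max_of_lt_left hK1, fun c r hr => ?_⟩
  have hne : (Metric.ball c r).Nonempty := Metric.nonempty_ball.2 hr
  haveI := hne.to_subtype
  set I : ℝ := ⨅ y : Metric.ball c r, Afun a q ‖(y : Rn n)‖ with hI_def
  have hI0 : 0 ≤ I := Real.iInf_nonneg fun y => (Afun_pos (norm_nonneg _)).le
  have hvol_pos : 0 < (volume (Metric.ball c r)).toReal :=
    ENNReal.toReal_pos (Metric.measure_ball_pos volume c hr).ne' measure_ball_lt_top.ne
  have hnorm_le : ∀ y : Rn n, y ∈ Metric.ball c r → ‖y‖ ≤ ‖c‖ + r := by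
    intro y hy
    have h1 : ‖y - c‖ < r := by rwa [Metric.mem_ball, dist_eq_norm] at hy
    calc ‖y‖ = ‖(y - c) + c‖ := by rw [sub_add_cancel]
      _ ≤ ‖y - c‖ + ‖c‖ := norm_add_le _ _
      _ ≤ ‖c‖ + r := by linarith
  have hIlow : Afun a q (‖c‖ + r) ≤ I := by
    refine le_ciInf fun y => Afun_anti ha hq0 (norm_nonneg _) (hnorm_le y y.2)
  by_cases hcase : r ≤ (1 + ‖c‖)/2
  · -- small ball
    have hpt : ∀ x ∈ Metric.ball c r, Afun a q ‖x‖ ≤ K1 * Afun a q (‖c‖ + r) := by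
      intro x hx
      have hxle : ‖x‖ ≤ ‖c‖ + r := hnorm_le x hx
      have hxge : ‖c‖ - r ≤ ‖x‖ := by
        have h1 : ‖c - x‖ < r := by
          rw [Metric.mem_ball, dist_eq_norm] at hx
          rwa [← norm_neg, neg_sub]
        have := norm_sub_norm_le c x
        linarith
      have comp := Afun_comp (N := (n:ℝ)) ha haN hq1 (norm_nonneg x) hxle
      have hratio : (1 + (‖c‖ + r))/(1 + ‖x‖) ≤ 3 := by
        rw [div_le_iff₀ (by positivity)]
        have h0 : (0:ℝ) ≤ ‖c‖ := norm_nonneg c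
        linarith
      have hratio_pow : ((1 + (‖c‖ + r))/(1 + ‖x‖)) ^ β ≤ 3 ^ β :=
        Real.rpow_le_rpow (by positivity) hratio hβ0
      have hA0 : 0 ≤ Afun a q (‖c‖ + r) := (Afun_pos (by positivity)).le
      calc Afun a q ‖x‖ ≤ C1 * ((1 + (‖c‖ + r))/(1 + ‖x‖)) ^ β * Afun a q (‖c‖ + r) := comp
        _ ≤ C1 * 3 ^ β * Afun a q (‖c‖ + r) := by
            refine mul_le_mul_of_nonneg_right ?_ hA0
            exact mul_le_mul_of_nonneg_left hratio_pow hC1.le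
        _ = K1 * Afun a q (‖c‖ + r) := by rw [hK1_def]
    have hint : (∫ x in Metric.ball c r, Afun a q ‖x‖)
        ≤ (volume (Metric.ball c r)).toReal * (K1 * Afun a q (‖c‖ + r)) := by
      have := setIntegral_mono_on (μ := volume)
        (integrableOn_Afun ha hq0 measure_ball_lt_top.ne)
        (integrableOn_const measure_ball_lt_top.ne)
        measurableSet_ball hpt
      rwa [setIntegral_const, smul_eq_mul] at this
    calc (volume (Metric.ball c r)).toReal⁻¹ * (∫ x in Metric.ball c r, Afun a q ‖x‖)
        ≤ (volume (Metric.ball c r)).toReal⁻¹ *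
          ((volume (Metric.ball c r)).toReal * (K1 * Afun a q (‖c‖ + r))) :=
          mul_le_mul_of_nonneg_left hint (by positivity)
      _ = K1 * Afun a q (‖c‖ + r) := by
          rw [← mul_assoc, inv_mul_cancel₀ hvol_pos.ne', one_mul]
      _ ≤ K1 * I := mul_le_mul_of_nonneg_left hIlow hK1.le
      _ ≤ max K1 K2 * I := mul_le_mul_of_nonneg_right (le_max_left _ _) hI0
  · -- large ball
    push_neg at hcase
    have hc2r : 1 + ‖c‖ < 2 * r := by linarith
    have h0c : (0:ℝ) ≤ ‖c‖ := norm_nonneg c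
    set R : ℝ := 4 * r with hR_def
    have hR1 : 1 ≤ R := by rw [hR_def]; linarith
    have hsub : Metric.ball c r ⊆ Metric.ball (0 : Rn n) R := by
      intro x hx
      rw [mem_ball_zero_iff]
      have := hnorm_le x hx
      rw [hR_def]; linarith
    have hmono : (∫ x in Metric.ball c r, Afun a q ‖x‖)
        ≤ ∫ x in Metric.ball (0 : Rn n) R, Afun a q ‖x‖ := by
      refine setIntegral_mono_set (integrableOn_Afun ha hq0 measure_ball_lt_top.ne)
        (Filter.Eventually.of_forall fun x => (Afun_pos (norm_nonneg x)).le)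
        (HasSubset.Subset.eventuallyLE hsub)
    have hIR : Afun a q R ≤ I := by
      refine le_ciInf fun y => Afun_anti ha hq0 (norm_nonneg _) ?_
      have := hnorm_le y y.2
      rw [hR_def]; linarith
    have hvol : (volume (Metric.ball c r)).toReal = r ^ n * volB1 := by
      rw [hvolB1_def, Measure.addHaar_ball volume c hr.le, hdim, ENNReal.toReal_mul,
        ENNReal.toReal_ofReal (by positivity)]
    have hRn : R ^ ((n:ℝ)) = 4 ^ ((n:ℝ)) * r ^ n := by
      rw [hR_def, Real.mul_rpow (by norm_num) hr.le, Real.rpow_natCast, Real.rpow_natCast]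
    calc (volume (Metric.ball c r)).toReal⁻¹ * (∫ x in Metric.ball c r, Afun a q ‖x‖)
        ≤ (volume (Metric.ball c r)).toReal⁻¹ * (C3 * R ^ ((n:ℝ)) * Afun a q R) := by
          refine mul_le_mul_of_nonneg_left (hmono.trans (hcore R hR1)) (by positivity)
      _ = K2 * Afun a q R := by
          rw [hvol, hRn, hK2_def]
          field_simp
      _ ≤ K2 * I := mul_le_mul_of_nonneg_left hIR hK2.le
      _ ≤ max K1 K2 * I := mul_le_mul_of_nonneg_right (le_max_right _ _) hI0


/-- `W_p` is a Muckenhoupt `A_1(ℝⁿ)` weight. -/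
theorem statement14 (n : ℕ) (hn : 1 ≤ n) (p : ℝ) (hp0 : 0 < p) (hp1 : p ≤ 1) :
    ∃ C : ℝ, 0 < C ∧ ∀ (c : Rn n) (r : ℝ), 0 < r →
      (volume (Metric.ball c r)).toReal⁻¹ * (∫ x in Metric.ball c r, Wp n p x) ≤
        C * ⨅ y : Metric.ball c r, Wp n p (y : Rn n) := by
  have hnpos : (0:ℝ) < n := by exact_mod_cast hn
  obtain ⟨a, q, ha, haN, hq0, hq1, hW⟩ :
      ∃ a q : ℝ, 0 ≤ a ∧ a < (n:ℝ) ∧ 0 ≤ q ∧ q ≤ 1 ∧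
        ∀ x : Rn n, Wp n p x = Afun a q ‖x‖ := by
    by_cases hp : p = 1
    · refine ⟨0, 1, le_refl 0, hnpos, zero_le_one, le_refl 1, fun x => ?_⟩
      rw [Wp, if_pos hp, Afun, neg_zero, Real.rpow_zero, one_mul,
        Real.rpow_neg_one, one_div]
    · by_cases hk : ∃ k : ℕ, (n:ℝ) * (1/p - 1) = (k:ℝ)
      · refine ⟨(n:ℝ)*(1-p), p, by nlinarith, by nlinarith, hp0.le, hp1, fun x => ?_⟩
        simp only [Wp, Afun, if_neg hp, if_pos hk, neg_mul]
      · refine ⟨(n:ℝ)*(1-p), 0, by nlinarith, by nlinarith, le_refl 0, zero_le_one,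
          fun x => ?_⟩
        simp only [Wp, Afun, if_neg hp, if_neg hk, neg_mul, neg_zero,
          Real.rpow_zero, mul_one]
  obtain ⟨C, hC, hball⟩ := A1_general hn ha haN hq0 hq1
  refine ⟨C, hC, fun c r hr => ?_⟩
  have h1 : (∫ x in Metric.ball c r, Wp n p x)
      = ∫ x in Metric.ball c r, Afun a q ‖x‖ := by simp_rw [hW]
  have h2 : (⨅ y : Metric.ball c r, Wp n p (y : Rn n))
      = ⨅ y : Metric.ball c r, Afun a q ‖(y : Rn n)‖ := by simp_rw [hW]
  rw [h1, h2]
  exact hball c r hr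
end
end

section
/- Let n ≥ 1 and p ∈ (0,1]. There exists a constant C ≥ 1 such that for all x ∈ ℝ^n and t ∈ (0,∞): (a) if p ∈ (0,1) and n(1/p-1) ∉ ℕ, then C^{-1}·t/(1+[t(1+|x|)^n]^{1-p}) ≤ Φ_p(x,t) ≤ C·t/(1+[t(1+|x|)^n]^{1-p}); (b) if p ∈ (0,1) and n(1/p-1) ∈ ℕ, then C^{-1}·t/(1+[t(1+|x|)^n]^{1-p}[log(e+|x|)]^p) ≤ Φ_p(x,t) ≤ C·t/(1+[t(1+|x|)^n]^{1-p}[log(e+|x|)]^p); (c) if p = 1, then C^{-1}·t/(log(e+t)+log(e+|x|)) ≤ Φ_1(x,t) ≤ C·t/(log(e+t)+log(e+|x|)). -/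
open MeasureTheory Real
open scoped ENNReal Classical

noncomputable section

/-- Pointwise equivalent expressions for `Φ_p(x, t)`, `t > 0`. -/
theorem statement17 (n : ℕ) (hn : 1 ≤ n) (p : ℝ) (hp0 : 0 < p) (hp1 : p ≤ 1) :
    ∃ C : ℝ, 1 ≤ C ∧ ∀ (x : Rn n) (t : ℝ), 0 < t →
      ((p < 1 ∧ ¬ ∃ k : ℕ, (n : ℝ) * (1 / p - 1) = (k : ℝ)) →
        C⁻¹ * (t / (1 + (t * (1 + ‖x‖) ^ (n : ℝ)) ^ (1 - p))) ≤ Phi n p x t ∧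
        Phi n p x t ≤ C * (t / (1 + (t * (1 + ‖x‖) ^ (n : ℝ)) ^ (1 - p)))) ∧
      ((p < 1 ∧ ∃ k : ℕ, (n : ℝ) * (1 / p - 1) = (k : ℝ)) →
        C⁻¹ * (t / (1 + (t * (1 + ‖x‖) ^ (n : ℝ)) ^ (1 - p) *
            (Real.log (Real.exp 1 + ‖x‖)) ^ p)) ≤ Phi n p x t ∧
        Phi n p x t ≤ C * (t / (1 + (t * (1 + ‖x‖) ^ (n : ℝ)) ^ (1 - p) *
            (Real.log (Real.exp 1 + ‖x‖)) ^ p))) ∧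
      (p = 1 →
        C⁻¹ * (t / (Real.log (Real.exp 1 + t) + Real.log (Real.exp 1 + ‖x‖))) ≤ Phi n p x t ∧
        Phi n p x t ≤
          C * (t / (Real.log (Real.exp 1 + t) + Real.log (Real.exp 1 + ‖x‖)))) := by
  have hone_le_exp : (1:ℝ) ≤ Real.exp 1 := by
    have := Real.add_one_le_exp (1:ℝ); linarith
  -- auxiliary subadditivity of rpow
  have aux_rpow_add_le : ∀ {a b q : ℝ}, 0 ≤ a → 0 ≤ b → 0 ≤ q → q ≤ 1 →
      (a + b) ^ q ≤ a ^ q + b ^ q := by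
    intro a b q ha hb hq hq1
    have h := NNReal.rpow_add_le_add_rpow a.toNNReal b.toNNReal hq hq1
    have h2 := NNReal.coe_le_coe.mpr h
    push_cast [NNReal.coe_rpow] at h2
    rwa [Real.coe_toNNReal a ha, Real.coe_toNNReal b hb] at h2
  -- log(e+t) ≤ 1 + t^s/s for 0 < s ≤ 1
  have aux_log_le : ∀ {s t : ℝ}, 0 < s → s ≤ 1 → 0 ≤ t →
      Real.log (Real.exp 1 + t) ≤ 1 + t ^ s / s := by
    intro s t hs0 hs1 ht
    have h1 : Real.log (Real.exp 1 + t) ≤ Real.log (Real.exp 1 * (1 + t)) := by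
      apply Real.log_le_log (by positivity)
      nlinarith
    rw [Real.log_mul (Real.exp_ne_zero 1) (by linarith), Real.log_exp] at h1
    have hb : (0:ℝ) < 1 + t := by linarith
    have h3 : Real.log ((1 + t) ^ s) ≤ t ^ s := by
      have := Real.log_le_sub_one_of_pos (Real.rpow_pos_of_pos hb s)
      have h4 : (1 + t) ^ s ≤ (1:ℝ) ^ s + t ^ s :=
        aux_rpow_add_le zero_le_one ht hs0.le hs1
      rw [Real.one_rpow] at h4
      linarith
    have h2 : Real.log (1 + t) ≤ t ^ s / s := by
      have hlog : Real.log (1 + t) = Real.log ((1 + t) ^ s) / s := by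
        rw [Real.log_rpow hb, mul_comm, mul_div_assoc, div_self hs0.ne', mul_one]
      rw [hlog]
      gcongr
    linarith
  -- sandwich lemma
  have sandwich : ∀ {C t L D : ℝ}, 0 < t → 1 ≤ L → 0 < D → 1 ≤ C → L + D ≤ C * (1 + D) →
      C⁻¹ * (t / (1 + D)) ≤ t / (L + D) ∧ t / (L + D) ≤ C * (t / (1 + D)) := by
    intro C t L D ht hL hD hC h
    have h1D : (0:ℝ) < 1 + D := by linarith
    have hLD : (0:ℝ) < L + D := by linarith
    constructor
    · rw [inv_mul_eq_div, div_div]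
      apply div_le_div_of_nonneg_left ht.le hLD
      rw [mul_comm]; exact h
    · calc t / (L + D) ≤ t / (1 + D) := by
            apply div_le_div_of_nonneg_left ht.le h1D (by linarith)
        _ ≤ C * (t / (1 + D)) := le_mul_of_one_le_left (by positivity) hC
  refine ⟨2 + 1 / (1 - p), ?_, ?_⟩
  · have h1p : (0:ℝ) ≤ 1 - p := by linarith
    have : (0:ℝ) ≤ 1 / (1 - p) := by
      rcases eq_or_lt_of_le h1p with h | h
      · simp [← h]
      · positivity
    linarith
  intro x t ht
  set L := Real.log (Real.exp 1 + t) with hLdef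
  have hL1 : (1:ℝ) ≤ L := by
    have h := Real.log_le_log (Real.exp_pos 1) (show Real.exp 1 ≤ Real.exp 1 + t by linarith)
    rwa [Real.log_exp] at h
  have hx1 : (1:ℝ) ≤ 1 + ‖x‖ := by
    have := norm_nonneg x; linarith
  have hpow1 : (1:ℝ) ≤ (1 + ‖x‖) ^ (n:ℝ) :=
    Real.one_le_rpow hx1 (by positivity)
  have hbase : 0 < t * (1 + ‖x‖) ^ (n:ℝ) := by positivity
  have hB1 : (1:ℝ) ≤ Real.log (Real.exp 1 + ‖x‖) := by
    have h := Real.log_le_log (Real.exp_pos 1)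
      (show Real.exp 1 ≤ Real.exp 1 + ‖x‖ by have := norm_nonneg x; linarith)
    rwa [Real.log_exp] at h
  refine ⟨?_, ?_, ?_⟩
  · rintro ⟨hplt, hnk⟩
    have hs : (0:ℝ) < 1 - p := by linarith
    set A := (t * (1 + ‖x‖) ^ (n:ℝ)) ^ (1 - p) with hAdef
    have hA : 0 < A := Real.rpow_pos_of_pos hbase _
    have htA : t ^ (1 - p) ≤ A := by
      rw [hAdef]
      apply Real.rpow_le_rpow ht.le ?_ hs.le
      nlinarith
    have hLle : L ≤ 1 + A / (1 - p) := by
      have := aux_log_le hs (by linarith) ht.le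
      have hdiv : t ^ (1 - p) / (1 - p) ≤ A / (1 - p) := by gcongr
      linarith
    have hPhi : Phi n p x t = t / (L + A) := by
      rw [Phi, if_neg hnk]
    rw [hPhi]
    apply sandwich ht hL1 hA (by
      have : (0:ℝ) ≤ 1 / (1 - p) := by positivity
      linarith)
    have h1s : (0:ℝ) < 1 / (1 - p) := by positivity
    have : A / (1 - p) = (1 / (1 - p)) * A := by ring
    nlinarith [mul_le_mul_of_nonneg_left (le_refl A) h1s.le]
  · rintro ⟨hplt, hk⟩
    have hs : (0:ℝ) < 1 - p := by linarith
    set A := (t * (1 + ‖x‖) ^ (n:ℝ)) ^ (1 - p) with hAdef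
    set B := (Real.log (Real.exp 1 + ‖x‖)) ^ p with hBdef
    have hA : 0 < A := Real.rpow_pos_of_pos hbase _
    have hBge : (1:ℝ) ≤ B := Real.one_le_rpow hB1 hp0.le
    have hD : 0 < A * B := by positivity
    have htA : t ^ (1 - p) ≤ A := by
      rw [hAdef]
      apply Real.rpow_le_rpow ht.le ?_ hs.le
      nlinarith
    have htAB : t ^ (1 - p) ≤ A * B := le_trans htA (le_mul_of_one_le_right hA.le hBge)
    have hLle : L ≤ 1 + (A * B) / (1 - p) := by
      have := aux_log_le hs (by linarith) ht.le
      have hdiv : t ^ (1 - p) / (1 - p) ≤ (A * B) / (1 - p) := by gcongr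
      linarith
    have hPhi : Phi n p x t = t / (L + A * B) := by
      rw [Phi, if_pos hk]
    rw [hPhi]
    apply sandwich ht hL1 hD (by
      have : (0:ℝ) ≤ 1 / (1 - p) := by positivity
      linarith)
    have h1s : (0:ℝ) < 1 / (1 - p) := by positivity
    have : (A * B) / (1 - p) = (1 / (1 - p)) * (A * B) := by ring
    nlinarith [mul_le_mul_of_nonneg_left (le_refl (A * B)) h1s.le]
  · rintro rfl
    set B := Real.log (Real.exp 1 + ‖x‖) with hBdef
    have hk : ∃ k : ℕ, (n : ℝ) * (1 / (1:ℝ) - 1) = (k : ℝ) := ⟨0, by norm_num⟩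
    have hPhi : Phi n 1 x t = t / (L + B) := by
      rw [Phi, if_pos hk]
      norm_num
      rfl
    rw [hPhi]
    have hLB : (0:ℝ) < L + B := by linarith
    have hC : (2:ℝ) + 1 / (1 - 1) = 2 := by norm_num
    rw [hC]
    have hv : (0:ℝ) ≤ t / (L + B) := by positivity
    constructor
    · calc (2:ℝ)⁻¹ * (t / (L + B)) ≤ 1 * (t / (L + B)) := by
            apply mul_le_mul_of_nonneg_right (by norm_num) hv
        _ = t / (L + B) := one_mul _
    · calc t / (L + B) = 1 * (t / (L + B)) := (one_mul _).symm
        _ ≤ 2 * (t / (L + B)) := mul_le_mul_of_nonneg_right (by norm_num) hv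
end
end

section
/- Let n ≥ 1. There exists a constant C ≥ 1 such that for every ball B = B(c_B, r_B) ⊂ ℝ^n satisfying either (r_B < 1 and |c_B| ≥ 1/r_B) or r_B ≥ 1, one has sup_{x ∈ B} log(e+|x|) ≤ log(e + 1/|B|) + sup_{x ∈ B} log(e+|x|) ≤ C · sup_{x ∈ B} log(e+|x|), where |B| denotes the Lebesgue measure of B. -/
open MeasureTheory Real
open scoped ENNReal Classical

noncomputable section

lemma aux_pow (a : ℝ) (ha : 0 ≤ a) : ∀ n : ℕ, 1 ≤ n →
    Real.exp 1 + a ^ n ≤ (Real.exp 1 + a) ^ n := by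
  have he : 1 ≤ Real.exp 1 := by have := Real.add_one_le_exp 1; linarith
  intro n hn
  induction n with
  | zero => omega
  | succ m ih =>
    rcases Nat.eq_zero_or_pos m with h | h
    · subst h; simp
    · have h1 := ih h
      have h2 : (0:ℝ) ≤ a ^ m := pow_nonneg ha m
      calc Real.exp 1 + a ^ (m+1) ≤ (Real.exp 1 + a ^ m) * (Real.exp 1 + a) := by
            rw [pow_succ]; nlinarith
        _ ≤ (Real.exp 1 + a) ^ (m+1) := by
            rw [pow_succ]
            exact mul_le_mul_of_nonneg_right h1 (by positivity)

/-- For balls with `r_B < 1 ≤ |c_B| r_B`, or `r_B ≥ 1`,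
`log(e + 1/|B|) + sup_{x ∈ B} log(e+|x|) ∼ sup_{x ∈ B} log(e+|x|)`. -/
theorem statement18 (n : ℕ) (hn : 1 ≤ n) :
    ∃ C : ℝ, 1 ≤ C ∧ ∀ (c : Rn n) (r : ℝ), 0 < r →
      ((r < 1 ∧ 1 / r ≤ ‖c‖) ∨ 1 ≤ r) →
      (⨆ x : Metric.ball c r, Real.log (Real.exp 1 + ‖(x : Rn n)‖)) ≤
        Real.log (Real.exp 1 + 1 / (volume (Metric.ball c r)).toReal) +
          (⨆ x : Metric.ball c r, Real.log (Real.exp 1 + ‖(x : Rn n)‖)) ∧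
      Real.log (Real.exp 1 + 1 / (volume (Metric.ball c r)).toReal) +
          (⨆ x : Metric.ball c r, Real.log (Real.exp 1 + ‖(x : Rn n)‖)) ≤
        C * ⨆ x : Metric.ball c r, Real.log (Real.exp 1 + ‖(x : Rn n)‖) := by
  haveI : Nonempty (Fin n) := ⟨⟨0, hn⟩⟩
  have he : 1 ≤ Real.exp 1 := by have := Real.add_one_le_exp 1; linarith
  have he0 : 0 < Real.exp 1 := Real.exp_pos 1
  set v : ℝ := (volume (Metric.ball (0 : Rn n) 1)).toReal with hv
  have hv0 : 0 < v :=
    ENNReal.toReal_pos (Metric.measure_ball_pos volume 0 one_pos).ne' measure_ball_lt_top.ne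
  set M : ℝ := max 1 (1 / v) with hM
  have hM1 : 1 ≤ M := le_max_left _ _
  have hMv : 1 / v ≤ M := le_max_right _ _
  have hv1 : 0 < 1 / v := by positivity
  have hlog1 : 0 ≤ Real.log (Real.exp 1 + 1 / v) := Real.log_nonneg (by linarith)
  have habs0 : (0:ℝ) ≤ |Real.log M| := abs_nonneg _
  have hn0 : (0:ℝ) ≤ n := n.cast_nonneg
  refine ⟨1 + Real.log (Real.exp 1 + 1 / v) + n + |Real.log M|, by linarith, ?_⟩
  intro c r hr hcase
  set S := ⨆ x : Metric.ball c r, Real.log (Real.exp 1 + ‖(x : Rn n)‖) with hS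
  have hvol : (volume (Metric.ball c r)).toReal = r ^ n * v := by
    rw [Measure.addHaar_ball volume c hr.le, finrank_euclideanSpace_fin,
      ENNReal.toReal_mul, ENNReal.toReal_ofReal (by positivity)]
  haveI hne : Nonempty ↥(Metric.ball c r) := ⟨⟨c, Metric.mem_ball_self hr⟩⟩
  have hbdd : BddAbove (Set.range fun x : Metric.ball c r =>
      Real.log (Real.exp 1 + ‖(x : Rn n)‖)) := by
    refine ⟨Real.log (Real.exp 1 + ‖c‖ + r), ?_⟩
    rintro _ ⟨⟨x, hx⟩, rfl⟩
    apply Real.log_le_log (by positivity)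
    have : ‖x‖ ≤ ‖c‖ + dist x c := by
      have := norm_sub_norm_le x c; rw [← dist_eq_norm] at this; linarith
    have := Metric.mem_ball.mp hx
    linarith
  have hSc : Real.log (Real.exp 1 + ‖c‖) ≤ S :=
    le_ciSup hbdd ⟨c, Metric.mem_ball_self hr⟩
  have hS1 : 1 ≤ S := by
    refine le_trans ?_ hSc
    calc (1:ℝ) = Real.log (Real.exp 1) := (Real.log_exp 1).symm
      _ ≤ _ := Real.log_le_log he0 (by have := norm_nonneg c; linarith)
  set L := Real.log (Real.exp 1 + 1 / (volume (Metric.ball c r)).toReal) with hL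
  have hL0 : 0 ≤ L := by
    apply Real.log_nonneg
    have : 0 ≤ 1 / (volume (Metric.ball c r)).toReal := by positivity
    linarith
  constructor
  · linarith
  · have key : L ≤ (Real.log (Real.exp 1 + 1 / v) + n + |Real.log M|) * S := by
      rcases hcase with ⟨hr1, hcr⟩ | hr1
      · -- small ball case
        have ha1 : 1 ≤ ‖c‖ := le_trans (by
            rw [le_div_iff₀ hr]; linarith) hcr
        set a := ‖c‖ with hadef
        have hbound : 1 / (r ^ n * v) ≤ M * a ^ n := by
          have h1 : 1 / r ≤ a := hcr
          have h1r : 0 < 1 / r := by positivity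
          have hpow : (1 / r) ^ n ≤ a ^ n := pow_le_pow_left₀ h1r.le h1 n
          have : 1 / (r ^ n * v) = (1 / r) ^ n * (1 / v) := by
            field_simp
            rw [one_div_pow, mul_one_div_cancel (pow_pos hr n).ne']
          rw [this]
          have han : (0:ℝ) ≤ a ^ n := by positivity
          calc (1/r)^n * (1/v) ≤ a ^ n * M :=
                mul_le_mul hpow hMv (by positivity) han
            _ = M * a ^ n := mul_comm _ _
        have h2 : Real.exp 1 + 1 / (r ^ n * v) ≤ M * (Real.exp 1 + a) ^ n := by
          have h3 : Real.exp 1 + a ^ n ≤ (Real.exp 1 + a) ^ n :=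
            aux_pow a (by linarith) n hn
          have han : (0:ℝ) ≤ a ^ n := by positivity
          calc Real.exp 1 + 1 / (r ^ n * v) ≤ Real.exp 1 + M * a ^ n := by linarith
            _ ≤ M * (Real.exp 1 + a ^ n) := by nlinarith
            _ ≤ M * (Real.exp 1 + a) ^ n := by nlinarith
        have hLle : L ≤ Real.log M + n * Real.log (Real.exp 1 + a) := by
          rw [hL, hvol]
          calc Real.log (Real.exp 1 + 1 / (r ^ n * v)) ≤
              Real.log (M * (Real.exp 1 + a) ^ n) := Real.log_le_log (by positivity) h2
            _ = Real.log M + n * Real.log (Real.exp 1 + a) := by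
                rw [Real.log_mul (by positivity) (by positivity), Real.log_pow]
        have hT1 : 1 ≤ Real.log (Real.exp 1 + a) := by
          calc (1:ℝ) = Real.log (Real.exp 1) := (Real.log_exp 1).symm
            _ ≤ _ := Real.log_le_log he0 (by linarith)
        have hTS : Real.log (Real.exp 1 + a) ≤ S := hSc
        have habs : Real.log M ≤ |Real.log M| := le_abs_self _
        have : L ≤ (|Real.log M| + n) * Real.log (Real.exp 1 + a) := by
          nlinarith [mul_le_mul_of_nonneg_left hT1 habs0]
        calc L ≤ (|Real.log M| + n) * Real.log (Real.exp 1 + a) := this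
          _ ≤ (|Real.log M| + n) * S := by
              apply mul_le_mul_of_nonneg_left hTS; positivity
          _ ≤ (Real.log (Real.exp 1 + 1 / v) + n + |Real.log M|) * S :=
              mul_le_mul_of_nonneg_right (by linarith) (by linarith)
      · -- big ball case
        have hrn : 1 ≤ r ^ n := by
          calc (1:ℝ) = 1 ^ n := (one_pow n).symm
            _ ≤ r ^ n := pow_le_pow_left₀ zero_le_one hr1 n
        have hbound : 1 / (r ^ n * v) ≤ 1 / v :=
          one_div_le_one_div_of_le hv0 (by nlinarith)
        have hLle : L ≤ Real.log (Real.exp 1 + 1 / v) := by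
          rw [hL, hvol]
          exact Real.log_le_log (by positivity) (by linarith)
        calc L ≤ Real.log (Real.exp 1 + 1 / v) := hLle
          _ = Real.log (Real.exp 1 + 1 / v) * 1 := (mul_one _).symm
          _ ≤ (Real.log (Real.exp 1 + 1 / v) + n + |Real.log M|) * S :=
              mul_le_mul (by linarith) hS1 zero_le_one (by linarith)
    have hring : (1 + Real.log (Real.exp 1 + 1 / v) + n + |Real.log M|) * S =
        S + (Real.log (Real.exp 1 + 1 / v) + n + |Real.log M|) * S := by ring
    linarith
end
end
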